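/- Let r ∈ ℂ satisfy |r| < 1/2 and |1 + r| ≤ 1. Then every complex root λ of the quadratic equation λ² - (1 + 2r)λ + r = 0 satisfies |λ| ≤ 1. Equivalently, both numbers r + 1/2 + (1/2)√(4r² + 1) and r + 1/2 - (1/2)√(4r² + 1) (for either choice of complex square root) have modulus at most 1. -/

import Mathlib

lemma root_in_disc (r : ℂ) (hr : ‖r‖ < 1 / 2) (hr1 : ‖1 + r‖ ≤ 1)
    (lam : ℂ) (h : lam ^ 2 - (1 + 2 * r) * lam + r = 0) : ‖lam‖ ≤ 1 := by
  by_contra hc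
  push_neg at hc
  have h2 : 2 * lam - 1 ≠ 0 := by
    intro h0
    have hl : lam = 1/2 := by linear_combination h0 / 2
    rw [hl] at hc
    rw [norm_div, norm_one] at hc
    simp at hc
    norm_num at hc
  set v : ℂ := (lam - 1) / (2 * lam - 1) with hv
  have h2' : lam * 2 - 1 ≠ 0 := by rwa [mul_comm]
  have key2 : lam * (1 - 2 * v) = 1 - v := by
    rw [hv]; field_simp
    ring
  have keyr : lam * v = r := by
    rw [hv]; field_simp
    linear_combination h
  have key1 : (1 + r) * (1 - 2 * v) = 1 - v - v ^ 2 := by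
    rw [hv]; field_simp
    linear_combination (-1) * h
  have h12v : (1 : ℂ) - 2 * v ≠ 0 := by
    have hq : (1 : ℂ) - 2 * v = 1 / (2 * lam - 1) := by rw [hv]; field_simp; ring
    rw [hq]
    exact one_div_ne_zero h2
  have c1 : ‖(1:ℂ) - 2 * v‖ < ‖1 - v‖ := by
    calc ‖(1:ℂ) - 2*v‖ = 1 * ‖(1:ℂ) - 2*v‖ := by ring
    _ < ‖lam‖ * ‖(1:ℂ) - 2*v‖ := by
        apply mul_lt_mul_of_pos_right hc (norm_pos_iff.mpr h12v)
    _ = ‖1 - v‖ := by rw [← norm_mul, key2]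
  have c2 : ‖(1:ℂ) - v - v ^ 2‖ ≤ ‖(1:ℂ) - 2 * v‖ := by
    calc ‖(1:ℂ) - v - v^2‖ = ‖1 + r‖ * ‖(1:ℂ) - 2*v‖ := by rw [← norm_mul, key1]
    _ ≤ 1 * ‖(1:ℂ) - 2*v‖ := by
        apply mul_le_mul_of_nonneg_right hr1 (norm_nonneg _)
    _ = ‖(1:ℂ) - 2*v‖ := one_mul _
  have c3 : ‖v‖ < 1 / 2 := by
    calc ‖v‖ = 1 * ‖v‖ := (one_mul _).symm
    _ ≤ ‖lam‖ * ‖v‖ := by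
        apply mul_le_mul_of_nonneg_right (le_of_lt hc) (norm_nonneg _)
    _ = ‖r‖ := by rw [← norm_mul, keyr]
    _ < 1/2 := hr
  -- move to real coordinates
  set x := v.re
  set y := v.im
  have e1 : Complex.normSq (1 - 2*v) = (1-2*x)^2 + (2*y)^2 := by
    simp [Complex.normSq_apply, Complex.sub_re, Complex.sub_im, Complex.mul_re, Complex.mul_im]
    ring
  have e2 : Complex.normSq (1 - v) = (1-x)^2 + y^2 := by
    simp [Complex.normSq_apply]
    ring
  have e3 : Complex.normSq (1 - v - v^2) = (1-x-x^2+y^2)^2 + (y+2*x*y)^2 := by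
    simp [Complex.normSq_apply, pow_two, Complex.mul_re, Complex.mul_im]
    ring
  have e4 : Complex.normSq v = x^2 + y^2 := by simp [Complex.normSq_apply]; ring
  have q1 : Complex.normSq (1 - 2*v) < Complex.normSq (1 - v) := by
    rw [← Complex.sq_norm, ← Complex.sq_norm]
    have := c1
    exact pow_lt_pow_left₀ c1 (norm_nonneg _) (by norm_num)
  have q2 : Complex.normSq (1 - v - v^2) ≤ Complex.normSq (1 - 2*v) := by
    rw [← Complex.sq_norm, ← Complex.sq_norm]
    exact pow_le_pow_left₀ (norm_nonneg _) c2 2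
  have q3 : Complex.normSq v < 1/4 := by
    rw [← Complex.sq_norm]
    nlinarith [norm_nonneg v]
  rw [e1, e2] at q1
  rw [e3, e1] at q2
  rw [e4] at q3
  nlinarith [sq_nonneg (x^2+y^2), sq_nonneg (2*x-3*(x^2+y^2)), sq_nonneg y, sq_nonneg (1-2*x), sq_nonneg x, sq_nonneg (x - (x^2+y^2))]

/-- If `r ∈ ℂ` satisfies `|r| < 1/2` and `|1 + r| ≤ 1`, then every
complex root `λ` of `λ² - (1 + 2r)λ + r = 0` satisfies `|λ| ≤ 1`; equivalently, for
either choice `s` of complex square root of `4r² + 1`, both `r + 1/2 + s/2` and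
`r + 1/2 - s/2` have modulus at most `1`. -/
theorem quadratic_roots_in_unit_disc (r : ℂ) (hr : ‖r‖ < 1 / 2) (hr1 : ‖1 + r‖ ≤ 1) :
    (∀ lam : ℂ, lam ^ 2 - (1 + 2 * r) * lam + r = 0 → ‖lam‖ ≤ 1) ∧
    (∀ s : ℂ, s ^ 2 = 4 * r ^ 2 + 1 →
      ‖r + 1 / 2 + s / 2‖ ≤ 1 ∧ ‖r + 1 / 2 - s / 2‖ ≤ 1) := by
  constructor
  · exact fun lam h => root_in_disc r hr hr1 lam h
  · intro s hs
    constructor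
    · exact root_in_disc r hr hr1 _ (by linear_combination hs / 4)
    · exact root_in_disc r hr hr1 _ (by linear_combination hs / 4)
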